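/- Let D ⊂ ℂ^p be the open Euclidean unit ball with Carathéodory distance ρ, base point 0, and let (y_k) ⊂ D converge to ξ with ‖ξ‖ = 1. Then for every z ∈ D, lim_k (ρ(z,y_k) − ρ(0,y_k)) = ½ log( |1 − ⟨z,ξ⟩|² / (1 − ‖z‖²) ). -/

import Mathlib

open scoped InnerProductSpace

/-- The inverse hyperbolic tangent, `tanh⁻¹ t = ½ log((1+t)/(1−t))`. -/
noncomputable def arctanh (t : ℝ) : ℝ := (1 / 2) * Real.log ((1 + t) / (1 - t))


lemma arctanh_sub (a b : ℝ) (ha0 : 0 ≤ a) (ha1 : a < 1) (hb0 : 0 ≤ b) (hb1 : b < 1) :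
    arctanh a - arctanh b
      = (1 / 2) * Real.log (((1 + a) / (1 + b)) ^ 2 * ((1 - b ^ 2) / (1 - a ^ 2))) := by
  have h1a : (0:ℝ) < 1 + a := by linarith
  have h2a : (0:ℝ) < 1 - a := by linarith
  have h1b : (0:ℝ) < 1 + b := by linarith
  have h2b : (0:ℝ) < 1 - b := by linarith
  have hx : (0:ℝ) < (1 + a) / (1 - a) := by positivity
  have hy : (0:ℝ) < (1 + b) / (1 - b) := by positivity
  unfold arctanh
  have heq : ((1 + a) / (1 - a)) / ((1 + b) / (1 - b))
      = ((1 + a) / (1 + b)) ^ 2 * ((1 - b ^ 2) / (1 - a ^ 2)) := by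
    have e1 : (1:ℝ) - a ^ 2 = (1 - a) * (1 + a) := by ring
    have e2 : (1:ℝ) - b ^ 2 = (1 - b) * (1 + b) := by ring
    rw [e1, e2]
    field_simp
  rw [← mul_sub, ← Real.log_div hx.ne' hy.ne', heq]

/-- Let `D ⊂ ℂ^p` be the open Euclidean unit ball with Carathéodory distance
`ρ(x,y) = tanh⁻¹ ‖g_{−x}(y)‖`, where the Möbius transformations `g` satisfy
`1 − ‖g_{−y}(z)‖² = (1−‖y‖²)(1−‖z‖²)/|1 − ⟨y,z⟩|²`.  If `(y_k) ⊂ D` converges to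
`ξ` with `‖ξ‖ = 1`, then for every `z ∈ D`,
`ρ(z,y_k) − ρ(0,y_k) → ½ log(|1 − ⟨z,ξ⟩|²/(1 − ‖z‖²))`. -/
theorem stmt8 {p : ℕ}
    (g : EuclideanSpace ℂ (Fin p) → EuclideanSpace ℂ (Fin p) → EuclideanSpace ℂ (Fin p))
    (hg0 : ∀ x, g 0 x = x)
    (hgid : ∀ y z : EuclideanSpace ℂ (Fin p), ‖y‖ < 1 → ‖z‖ < 1 →
      1 - ‖g (-y) z‖ ^ 2 =
        (1 - ‖y‖ ^ 2) * (1 - ‖z‖ ^ 2) / ‖1 - ⟪y, z⟫_ℂ‖ ^ 2)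
    (ρ : EuclideanSpace ℂ (Fin p) → EuclideanSpace ℂ (Fin p) → ℝ)
    (hρ : ∀ x y, ρ x y = arctanh ‖g (-x) y‖)
    (y : ℕ → EuclideanSpace ℂ (Fin p)) (hy : ∀ k, ‖y k‖ < 1)
    (ξ : EuclideanSpace ℂ (Fin p)) (hξ : ‖ξ‖ = 1)
    (hconv : Filter.Tendsto y Filter.atTop (nhds ξ))
    (z : EuclideanSpace ℂ (Fin p)) (hz : ‖z‖ < 1) :
    Filter.Tendsto (fun k => ρ z (y k) - ρ 0 (y k)) Filter.atTop
      (nhds ((1 / 2) * Real.log (‖1 - ⟪z, ξ⟫_ℂ‖ ^ 2 / (1 - ‖z‖ ^ 2)))) := by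
  set a : ℕ → ℝ := fun k => ‖g (-z) (y k)‖ with ha
  set b : ℕ → ℝ := fun k => ‖y k‖ with hb
  set m : ℕ → ℝ := fun k => ‖1 - ⟪z, y k⟫_ℂ‖ ^ 2 with hm
  have hz2 : (0:ℝ) < 1 - ‖z‖ ^ 2 := by nlinarith [norm_nonneg z]
  -- denominators positive
  have habs : ∀ w : EuclideanSpace ℂ (Fin p), ‖w‖ ≤ 1 →
      0 < ‖1 - ⟪z, w⟫_ℂ‖ := by
    intro w hw
    have h1 : ‖⟪z, w⟫_ℂ‖ < 1 := by
      have := norm_inner_le_norm (𝕜 := ℂ) z w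
      have : ‖⟪z, w⟫_ℂ‖ < 1 := by nlinarith [norm_nonneg z, norm_nonneg w]
      simpa using this
    have hne : (1 : ℂ) - ⟪z, w⟫_ℂ ≠ 0 := by
      intro h
      have : ⟪z, w⟫_ℂ = 1 := by linear_combination -h
      rw [this] at h1; simp at h1
    exact norm_pos_iff.mpr hne
  have hmk : ∀ k, 0 < m k := fun k => pow_pos (habs (y k) (hy k).le) 2
  have hA : ∀ k, 1 - a k ^ 2 = (1 - ‖z‖ ^ 2) * (1 - b k ^ 2) / m k :=
    fun k => hgid z (y k) hz (hy k)
  have hbk : ∀ k, 0 ≤ b k ∧ b k < 1 := fun k => ⟨norm_nonneg _, hy k⟩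
  have hak : ∀ k, 0 ≤ a k ∧ a k < 1 := by
    intro k
    refine ⟨norm_nonneg _, ?_⟩
    have h := hA k
    have hpos : 0 < (1 - ‖z‖ ^ 2) * (1 - b k ^ 2) / m k := by
      have hb2 : (0:ℝ) < 1 - b k ^ 2 := by nlinarith [(hbk k).1, (hbk k).2]
      exact div_pos (mul_pos hz2 hb2) (hmk k)
    nlinarith [norm_nonneg (g (-z) (y k))]
  -- the exact formula
  have hf : ∀ k, ρ z (y k) - ρ 0 (y k)
      = (1 / 2) * Real.log (((1 + a k) / (1 + b k)) ^ 2 * (m k / (1 - ‖z‖ ^ 2))) := by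
    intro k
    have h0 : ρ 0 (y k) = arctanh (b k) := by
      rw [hρ]; simp [hg0, hb]
    have hzk : ρ z (y k) = arctanh (a k) := hρ z (y k)
    rw [hzk, h0, arctanh_sub (a k) (b k) (hak k).1 (hak k).2 (hbk k).1 (hbk k).2]
    congr 3
    have hb2 : (0:ℝ) < 1 - b k ^ 2 := by nlinarith [(hbk k).1, (hbk k).2]
    rw [hA k]
    field_simp [hb2.ne', hz2.ne', (hmk k).ne']
  simp only [hf]
  -- convergence
  have hinner : Filter.Tendsto (fun k => ⟪z, y k⟫_ℂ) Filter.atTop (nhds ⟪z, ξ⟫_ℂ) :=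
    Filter.Tendsto.inner tendsto_const_nhds hconv
  have hmlim : Filter.Tendsto m Filter.atTop (nhds (‖1 - ⟪z, ξ⟫_ℂ‖ ^ 2)) := by
    apply Filter.Tendsto.pow
    exact (continuous_norm.tendsto _).comp (tendsto_const_nhds.sub hinner)
  have hMpos : 0 < ‖1 - ⟪z, ξ⟫_ℂ‖ ^ 2 := pow_pos (habs ξ hξ.le) 2
  have hblim : Filter.Tendsto b Filter.atTop (nhds 1) := by
    have := hconv.norm
    rwa [hξ] at this
  have hasq : Filter.Tendsto (fun k => a k ^ 2) Filter.atTop (nhds 1) := by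
    have h1 : Filter.Tendsto (fun k => (1 - ‖z‖ ^ 2) * (1 - b k ^ 2) / m k)
        Filter.atTop (nhds 0) := by
      have hnum : Filter.Tendsto (fun k => (1 - ‖z‖ ^ 2) * (1 - b k ^ 2))
          Filter.atTop (nhds 0) := by
        have hb2 : Filter.Tendsto (fun k => (1:ℝ) - b k ^ 2) Filter.atTop (nhds 0) := by
          have := (tendsto_const_nhds (x := (1:ℝ)) (f := Filter.atTop (α := ℕ))).sub (hblim.pow 2)
          norm_num at this; exact this
        simpa using hb2.const_mul (1 - ‖z‖ ^ 2)
      have := hnum.div hmlim hMpos.ne'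
      simp only [zero_div] at this
      exact this
    have h2 : Filter.Tendsto (fun k => 1 - (1 - ‖z‖ ^ 2) * (1 - b k ^ 2) / m k)
        Filter.atTop (nhds 1) := by
      simpa using tendsto_const_nhds.sub h1
    refine h2.congr fun k => ?_
    rw [← hA k]; ring
  have halim : Filter.Tendsto a Filter.atTop (nhds 1) := by
    have := hasq.sqrt
    simp only [Real.sqrt_one] at this
    refine this.congr fun k => ?_
    exact Real.sqrt_sq (hak k).1
  have hE : Filter.Tendsto
      (fun k => ((1 + a k) / (1 + b k)) ^ 2 * (m k / (1 - ‖z‖ ^ 2)))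
      Filter.atTop
      (nhds (‖1 - ⟪z, ξ⟫_ℂ‖ ^ 2 / (1 - ‖z‖ ^ 2))) := by
    have h1 : Filter.Tendsto (fun k => ((1 + a k) / (1 + b k)) ^ 2) Filter.atTop (nhds 1) := by
      have ha1 : Filter.Tendsto (fun k => 1 + a k) Filter.atTop (nhds 2) := by
        have := (tendsto_const_nhds (x := (1:ℝ)) (f := Filter.atTop (α := ℕ))).add halim
        norm_num at this; exact this
      have hb1 : Filter.Tendsto (fun k => 1 + b k) Filter.atTop (nhds 2) := by
        have := (tendsto_const_nhds (x := (1:ℝ)) (f := Filter.atTop (α := ℕ))).add hblim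
        norm_num at this; exact this
      have := (ha1.div hb1 two_ne_zero).pow 2
      norm_num at this
      exact this
    have h2 := hmlim.div tendsto_const_nhds hz2.ne'
    have := h1.mul h2
    simpa using this
  have hLpos : 0 < ‖1 - ⟪z, ξ⟫_ℂ‖ ^ 2 / (1 - ‖z‖ ^ 2) := div_pos hMpos hz2
  exact (hE.log hLpos.ne').const_mul (1 / 2)
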